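/- Let p = 4k+3 be a prime and R a commutative ring of characteristic 2. For any a_i, b_i, c_i, a_j, b_j, c_j ∈ R, Q_p(a_i,b_i,c_i) · Q_p(a_j,b_j,c_j)^T = Q_p( a_i a_j + b_i b_j + c_i c_j , (a_i c_j + b_i a_j) + k (b_i b_j + c_i c_j) + k b_i c_j + (k+1) c_i b_j , (a_i b_j + c_i a_j) + k (b_i b_j + c_i c_j) + (k+1) b_i c_j + k c_i b_j ). -/

import Mathlib

open Matrix
open scoped Classical

/-- The quadratic residue circulant matrix `Q_p(a,b,c)`: the `p × p` matrix over `R`,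
indexed by `ZMod p`, whose `(i,j)` entry is `a` if `i = j`, `b` if `j - i` is a
nonzero quadratic residue modulo `p`, and `c` otherwise. -/
noncomputable def Qmat (p : ℕ) {R : Type*} [CommRing R] (a b c : R) :
    Matrix (ZMod p) (ZMod p) R :=
  Matrix.of fun i j => if i = j then a else if IsSquare (j - i) then b else c

namespace QmatAux

open Finset

variable {p k : ℕ} [Fact (Nat.Prime p)]

lemma my_sum_chi (hpk : p = 4*k+3) : ∑ x : ZMod p, quadraticChar (ZMod p) x = 0 := by
  apply quadraticChar_sum_zero
  rw [ZMod.ringChar_zmod_n]; omega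

lemma my_sum_chi_shift (hpk : p = 4*k+3) :
    ∑ x : ZMod p, quadraticChar (ZMod p) (x+1) = 0 := by
  rw [← my_sum_chi hpk]
  exact Fintype.sum_equiv (Equiv.addRight 1) _ _ (fun x => rfl)

lemma my_chi_neg_one (hpk : p = 4*k+3) : quadraticChar (ZMod p) (-1) = -1 := by
  rw [quadraticChar_neg_one_iff_not_isSquare, ZMod.exists_sq_eq_neg_one_iff]
  simp only [ne_eq, not_not]
  omega

lemma my_sum_chi_mul (hpk : p = 4*k+3) :
    ∑ x : ZMod p, quadraticChar (ZMod p) x * quadraticChar (ZMod p) (x+1) = -1 := by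
  set χ := quadraticChar (ZMod p) with hχ
  have hp2 : ringChar (ZMod p) ≠ 2 := by rw [ZMod.ringChar_zmod_n]; omega
  have h0 : ∑ x ∈ (univ : Finset (ZMod p)).erase 0, χ x * χ (x+1)
      = ∑ x ∈ (univ : Finset (ZMod p)).erase 0, χ (1 + x⁻¹) := by
    apply Finset.sum_congr rfl
    intro x hx
    have hx0 : x ≠ 0 := (Finset.mem_erase.mp hx).1
    have h1 : x * (1 + x⁻¹) = x + 1 := by field_simp
    have h2 : χ x * χ (1 + x⁻¹) = χ (x + 1) := by rw [← _root_.map_mul, h1]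
    have h3 : χ x * χ x = 1 := by
      have := quadraticChar_sq_one (F := ZMod p) hx0
      rw [sq] at this; exact this
    calc χ x * χ (x+1) = χ x * (χ x * χ (1 + x⁻¹)) := by rw [h2]
      _ = (χ x * χ x) * χ (1 + x⁻¹) := by ring
      _ = χ (1 + x⁻¹) := by rw [h3, one_mul]
  have h1 : ∑ x ∈ (univ : Finset (ZMod p)).erase 0, χ (1 + x⁻¹)
      = ∑ y ∈ (univ : Finset (ZMod p)).erase 1, χ y := by
    apply Finset.sum_nbij' (fun x => 1 + x⁻¹) (fun y => (y - 1)⁻¹)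
    · intro x hx
      have hx0 : x ≠ 0 := (Finset.mem_erase.mp hx).1
      simp only [Finset.mem_erase, Finset.mem_univ, and_true]
      intro h
      have : x⁻¹ = 0 := by linear_combination h
      simp [inv_eq_zero, hx0] at this
    · intro y hy
      have hy1 : y ≠ 1 := (Finset.mem_erase.mp hy).1
      simp only [Finset.mem_erase, Finset.mem_univ, and_true, ne_eq, inv_eq_zero,
        sub_eq_zero]
      exact hy1
    · intro x hx
      have hx0 : x ≠ 0 := (Finset.mem_erase.mp hx).1
      field_simp
      ring
    · intro y hy
      have hy1 : y ≠ 1 := (Finset.mem_erase.mp hy).1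
      have h : y - 1 ≠ 0 := sub_ne_zero.mpr hy1
      field_simp
      ring
    · intro x hx; rfl
  have h2 : ∑ y ∈ (univ : Finset (ZMod p)).erase 1, χ y = -1 := by
    have := Finset.add_sum_erase (univ : Finset (ZMod p)) χ (Finset.mem_univ 1)
    have hs : ∑ y : ZMod p, χ y = 0 := quadraticChar_sum_zero hp2
    have h1' : χ 1 = 1 := map_one χ
    rw [hs, h1'] at this
    linarith
  have hz : χ 0 * χ (0+1) = 0 := by simp [hχ]
  calc ∑ x : ZMod p, χ x * χ (x+1)
      = χ 0 * χ (0+1) + ∑ x ∈ (univ : Finset (ZMod p)).erase 0, χ x * χ (x+1) :=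
        (Finset.add_sum_erase _ _ (Finset.mem_univ 0)).symm
    _ = -1 := by rw [hz, h0, h1, h2, zero_add]

lemma my_card_pair (hpk : p = 4*k+3) (ε δ : ℤ) (hε : ε = 1 ∨ ε = -1) (hδ : δ = 1 ∨ δ = -1) :
    ((univ : Finset (ZMod p)).filter
        (fun x => quadraticChar (ZMod p) x = δ ∧ quadraticChar (ZMod p) (x+1) = ε)).card
      = if δ = 1 ∧ ε = -1 then k + 1 else k := by
  have hsc := my_sum_chi hpk
  have hss := my_sum_chi_shift hpk
  have hsm := my_sum_chi_mul hpk
  have hneg := my_chi_neg_one hpk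
  set χ := quadraticChar (ZMod p) with hχ
  have hδ0 : δ ≠ 0 := by rcases hδ with h | h <;> simp [h]
  have hε0 : ε ≠ 0 := by rcases hε with h | h <;> simp [h]
  set T := ∑ x : ZMod p, (1 + δ * χ x) * (1 + ε * χ (x+1)) with hT
  have stepA : T = (p : ℤ) - δ * ε := by
    have expand : ∀ x : ZMod p, (1 + δ * χ x) * (1 + ε * χ (x+1))
        = 1 + δ * χ x + ε * χ (x+1) + (δ*ε) * (χ x * χ (x+1)) := fun x => by ring
    rw [hT, Finset.sum_congr rfl fun x _ => expand x]
    rw [Finset.sum_add_distrib, Finset.sum_add_distrib, Finset.sum_add_distrib,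
      ← Finset.mul_sum, ← Finset.mul_sum, ← Finset.mul_sum,
      hsc, hss, hsm, Finset.sum_const, Finset.card_univ, ZMod.card]
    push_cast; ring
  have h01 : (0 : ZMod p) ≠ -1 := by
    intro h
    have : (1 : ZMod p) = 0 := by linear_combination h
    exact one_ne_zero this
  set N := ((univ : Finset (ZMod p)).filter (fun x => χ x = δ ∧ χ (x+1) = ε)).card with hN
  have stepB : T = (1 + ε) + (1 - δ) + 4 * N := by
    have hm1 : (-1 : ZMod p) ∈ (univ : Finset (ZMod p)).erase 0 := by
      simp [Finset.mem_erase, h01.symm]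
    rw [hT, ← Finset.add_sum_erase _ _ (Finset.mem_univ (0 : ZMod p)),
      ← Finset.add_sum_erase _ _ hm1]
    have t0 : (1 + δ * χ 0) * (1 + ε * χ (0+1)) = 1 + ε := by
      simp [hχ, quadraticChar_zero]
    have t1 : (1 + δ * χ (-1)) * (1 + ε * χ ((-1)+1)) = 1 - δ := by
      rw [hneg]; norm_num [hχ, quadraticChar_zero]; ring
    rw [t0, t1]
    have hU : ∑ x ∈ (((univ : Finset (ZMod p)).erase 0).erase (-1)),
        (1 + δ * χ x) * (1 + ε * χ (x+1))
        = ∑ x ∈ (((univ : Finset (ZMod p)).erase 0).erase (-1)),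
          (if χ x = δ ∧ χ (x+1) = ε then 4 else 0) := by
      apply Finset.sum_congr rfl
      intro x hx
      have hx1 : x ≠ -1 := (Finset.mem_erase.mp hx).1
      have hx0 : x ≠ 0 := (Finset.mem_erase.mp (Finset.mem_erase.mp hx).2).1
      have hx1' : x + 1 ≠ 0 := fun h => hx1 (by linear_combination h)
      rcases quadraticChar_dichotomy (F := ZMod p) hx0 with h1 | h1 <;>
        rcases quadraticChar_dichotomy (F := ZMod p) hx1' with h2 | h2 <;>
        rw [← hχ] at h1 h2 <;>
        rcases hδ with hd | hd <;> rcases hε with he | he <;>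
        simp [h1, h2, hd, he] <;> ring
    rw [hU, ← Finset.sum_filter]
    have hfil : (((univ : Finset (ZMod p)).erase 0).erase (-1)).filter
        (fun x => χ x = δ ∧ χ (x+1) = ε)
        = (univ : Finset (ZMod p)).filter (fun x => χ x = δ ∧ χ (x+1) = ε) := by
      ext x
      simp only [Finset.mem_filter, Finset.mem_erase, Finset.mem_univ, true_and, and_true]
      constructor
      · rintro ⟨_, h⟩; exact h
      · rintro ⟨h1, h2⟩
        have hx0 : x ≠ 0 := by
          intro hx; apply hδ0; rw [← h1, hx, hχ, quadraticChar_zero]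
        have hx1 : x ≠ -1 := by
          intro hx; apply hε0
          rw [← h2, hx, neg_add_cancel, hχ, quadraticChar_zero]
        tauto
    rw [hfil, Finset.sum_const, ← hN]
    push_cast; ring
  have key : (4 : ℤ) * N = (p : ℤ) - δ * ε - (1 + ε) - (1 - δ) := by
    rw [stepA] at stepB; linarith
  have hp : (p : ℤ) = 4 * k + 3 := by exact_mod_cast congrArg (Nat.cast : ℕ → ℤ) hpk
  rcases hδ with hd | hd <;> rcases hε with he | he <;> subst hd he <;>
    simp only [hp] at key <;> norm_num at key ⊢ <;> omega

lemma my_chi_cancel {u v c : ℤ} (huu : u * u = 1) : u * v = c ↔ v = c * u := by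
  constructor <;> intro h
  · linear_combination u * h - v * huu
  · linear_combination u * h + c * huu

lemma my_card_twist (i j : ZMod p) (hij : i ≠ j) (ε δ : ℤ) :
    ((univ : Finset (ZMod p)).filter
        (fun l => quadraticChar (ZMod p) (l-i) = ε ∧ quadraticChar (ZMod p) (l-j) = δ)).card
    = ((univ : Finset (ZMod p)).filter
        (fun x => quadraticChar (ZMod p) x = δ * quadraticChar (ZMod p) (j-i)
          ∧ quadraticChar (ZMod p) (x+1) = ε * quadraticChar (ZMod p) (j-i))).card := by
  set χ := quadraticChar (ZMod p) with hχ
  set d := j - i with hd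
  have hd0 : d ≠ 0 := sub_ne_zero.mpr (Ne.symm hij)
  have hdd : χ d * χ d = 1 := by
    have := quadraticChar_sq_one (F := ZMod p) hd0; rw [sq] at this; exact this
  have key1 : ∀ l : ZMod p, d * ((l - j) * d⁻¹) = l - j := by intro l; field_simp
  have key2 : ∀ l : ZMod p, d * ((l - j) * d⁻¹ + 1) = l - i := by
    intro l; rw [mul_add, key1, mul_one]; ring
  apply Finset.card_nbij' (fun l => (l - j) * d⁻¹) (fun x => j + d * x)
  · intro l hl
    simp only [Finset.mem_coe, Finset.mem_filter, Finset.mem_univ, true_and] at hl ⊢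
    obtain ⟨h1, h2⟩ := hl
    constructor
    · rw [← my_chi_cancel hdd, ← _root_.map_mul, key1]; exact h2
    · rw [← my_chi_cancel hdd, ← _root_.map_mul, key2]; exact h1
  · intro x hx
    simp only [Finset.mem_coe, Finset.mem_filter, Finset.mem_univ, true_and] at hx ⊢
    obtain ⟨h1, h2⟩ := hx
    constructor
    · have e : j + d * x - i = d * (x + 1) := by rw [hd]; ring
      rw [e, _root_.map_mul, my_chi_cancel hdd]; exact h2
    · have e : j + d * x - j = d * x := by ring
      rw [e, _root_.map_mul, my_chi_cancel hdd]; exact h1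
  · intro l _; field_simp; ring
  · intro x _; field_simp; ring

lemma my_card_final (hpk : p = 4*k+3) (i j : ZMod p) (hij : i ≠ j) (ε δ : ℤ)
    (hε : ε = 1 ∨ ε = -1) (hδ : δ = 1 ∨ δ = -1) :
    ((univ : Finset (ZMod p)).filter
        (fun l => quadraticChar (ZMod p) (l-i) = ε ∧ quadraticChar (ZMod p) (l-j) = δ)).card
      = if δ * quadraticChar (ZMod p) (j-i) = 1 ∧ ε * quadraticChar (ZMod p) (j-i) = -1
        then k + 1 else k := by
  have hd0 : j - i ≠ 0 := sub_ne_zero.mpr (Ne.symm hij)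
  rcases quadraticChar_dichotomy (F := ZMod p) hd0 with hd | hd <;>
    rw [my_card_twist i j hij ε δ, my_card_pair hpk _ _ ?_ ?_] <;>
    rcases hε with he | he <;> rcases hδ with h | h <;> simp [hd, he, h]

lemma my_card_single (hpk : p = 4*k+3) (δ : ℤ) (hδ : δ = 1 ∨ δ = -1) :
    ((univ : Finset (ZMod p)).filter (fun x => quadraticChar (ZMod p) x = δ)).card
      = 2 * k + 1 := by
  have hsc := my_sum_chi hpk
  set χ := quadraticChar (ZMod p) with hχ
  have hδ0 : δ ≠ 0 := by rcases hδ with h | h <;> simp [h]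
  set N := ((univ : Finset (ZMod p)).filter (fun x => χ x = δ)).card with hN
  have stepA : ∑ x : ZMod p, (1 + δ * χ x) = (p : ℤ) := by
    rw [Finset.sum_add_distrib, ← Finset.mul_sum, hsc, Finset.sum_const,
      Finset.card_univ, ZMod.card]
    push_cast; ring
  have stepB : ∑ x : ZMod p, (1 + δ * χ x) = 1 + 2 * N := by
    rw [← Finset.add_sum_erase _ _ (Finset.mem_univ (0 : ZMod p))]
    have t0 : (1 : ℤ) + δ * χ 0 = 1 := by simp [hχ, quadraticChar_zero]
    rw [t0]
    have hU : ∑ x ∈ (univ : Finset (ZMod p)).erase 0, (1 + δ * χ x)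
        = ∑ x ∈ (univ : Finset (ZMod p)).erase 0, (if χ x = δ then 2 else 0) := by
      apply Finset.sum_congr rfl
      intro x hx
      have hx0 : x ≠ 0 := (Finset.mem_erase.mp hx).1
      rcases quadraticChar_dichotomy (F := ZMod p) hx0 with h | h <;>
        rw [← hχ] at h <;> rcases hδ with hd | hd <;> simp [h, hd]
    rw [hU, ← Finset.sum_filter]
    have hfil : ((univ : Finset (ZMod p)).erase 0).filter (fun x => χ x = δ)
        = (univ : Finset (ZMod p)).filter (fun x => χ x = δ) := by
      ext x
      simp only [Finset.mem_filter, Finset.mem_erase, Finset.mem_univ, true_and, and_true]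
      constructor
      · rintro ⟨_, h⟩; exact h
      · intro h
        refine ⟨fun hx => hδ0 ?_, h⟩
        rw [← h, hx, hχ, quadraticChar_zero]
    rw [hfil, Finset.sum_const, ← hN]
    push_cast; ring
  have hp : (p : ℤ) = 4 * k + 3 := by exact_mod_cast congrArg (Nat.cast : ℕ → ℤ) hpk
  rw [stepA, hp] at stepB
  omega

lemma my_card_single_shift (i : ZMod p) (δ : ℤ) :
    ((univ : Finset (ZMod p)).filter (fun l => quadraticChar (ZMod p) (l - i) = δ)).card
    = ((univ : Finset (ZMod p)).filter (fun x => quadraticChar (ZMod p) x = δ)).card := by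
  apply Finset.card_nbij' (fun l => l - i) (fun x => x + i) <;>
    intro a ha <;> simp_all [Finset.mem_filter]

lemma my_card_final' (hpk : p = 4*k+3) (i j : ZMod p) (hij : i ≠ j) (ε δ : ℤ)
    (hε : ε = 1 ∨ ε = -1) (hδ : δ = 1 ∨ δ = -1) (n : ℕ)
    (hn : (if δ * quadraticChar (ZMod p) (j-i) = 1 ∧ ε * quadraticChar (ZMod p) (j-i) = -1
        then k + 1 else k) = n) :
    ((univ : Finset (ZMod p)).filter
        (fun l => quadraticChar (ZMod p) (l-i) = ε ∧ quadraticChar (ZMod p) (l-j) = δ)).card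
      = n :=
  (my_card_final hpk i j hij ε δ hε hδ).trans hn

end QmatAux

theorem stmt1 {R : Type*} [CommRing R] [CharP R 2] (p k : ℕ) [Fact (Nat.Prime p)]
    (hpk : p = 4 * k + 3) (ai bi ci aj bj cj : R) :
    Qmat p ai bi ci * (Qmat p aj bj cj)ᵀ =
      Qmat p (ai * aj + bi * bj + ci * cj)
        ((ai * cj + bi * aj) + (k : R) * (bi * bj + ci * cj) + (k : R) * (bi * cj) +
          ((k : R) + 1) * (ci * bj))
        ((ai * bj + ci * aj) + (k : R) * (bi * bj + ci * cj) + ((k : R) + 1) * (bi * cj) +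
          (k : R) * (ci * bj)) := by
  classical
  have h2R : (2 : R) = 0 := by exact_mod_cast (CharP.cast_eq_zero R 2)
  ext i j
  rw [Matrix.mul_apply]
  simp only [Matrix.transpose_apply]
  by_cases hij : i = j
  · subst hij
    have hRHS : Qmat p (ai * aj + bi * bj + ci * cj)
        ((ai * cj + bi * aj) + (k : R) * (bi * bj + ci * cj) + (k : R) * (bi * cj) +
          ((k : R) + 1) * (ci * bj))
        ((ai * bj + ci * aj) + (k : R) * (bi * bj + ci * cj) + ((k : R) + 1) * (bi * cj) +
          (k : R) * (ci * bj)) i i = ai * aj + bi * bj + ci * cj := by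
      simp [Qmat]
    rw [hRHS, ← Finset.add_sum_erase _ _ (Finset.mem_univ i)]
    have hdiag : Qmat p ai bi ci i i * Qmat p aj bj cj i i = ai * aj := by
      simp [Qmat]
    rw [hdiag]
    have hrest : ∀ l ∈ Finset.univ.erase i,
        Qmat p ai bi ci i l * Qmat p aj bj cj i l
        = (if quadraticChar (ZMod p) (l - i) = 1 then bi * bj else ci * cj) := by
      intro l hl
      have hli : l ≠ i := (Finset.mem_erase.mp hl).1
      have hli0 : l - i ≠ 0 := sub_ne_zero.mpr hli
      simp only [Qmat, Matrix.of_apply]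
      rw [if_neg (show ¬ i = l from fun h => hli h.symm),
        if_neg (show ¬ i = l from fun h => hli h.symm)]
      by_cases hs : IsSquare (l - i)
      · rw [if_pos hs, if_pos hs, if_pos ((quadraticChar_one_iff_isSquare hli0).mpr hs)]
      · rw [if_neg hs, if_neg hs,
          if_neg (fun h => hs ((quadraticChar_one_iff_isSquare hli0).mp h))]
    rw [Finset.sum_congr rfl hrest, Finset.sum_ite, Finset.sum_const, Finset.sum_const]
    have hc1 : ((Finset.univ.erase i).filter
        (fun l => quadraticChar (ZMod p) (l - i) = 1)).card = 2*k+1 := by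
      have heq : (Finset.univ.erase i).filter (fun l => quadraticChar (ZMod p) (l - i) = 1)
          = Finset.univ.filter (fun l => quadraticChar (ZMod p) (l - i) = 1) := by
        ext l
        simp only [Finset.mem_filter, Finset.mem_erase, Finset.mem_univ, true_and,
          and_true]
        constructor
        · rintro ⟨_, h⟩; exact h
        · intro h
          refine ⟨fun hl => ?_, h⟩
          rw [hl, sub_self, quadraticChar_zero] at h
          exact one_ne_zero h.symm
      rw [heq, QmatAux.my_card_single_shift, QmatAux.my_card_single hpk 1 (Or.inl rfl)]
    have hc2 : ((Finset.univ.erase i).filter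
        (fun l => ¬ quadraticChar (ZMod p) (l - i) = 1)).card = 2*k+1 := by
      have heq : (Finset.univ.erase i).filter
          (fun l => ¬ quadraticChar (ZMod p) (l - i) = 1)
          = Finset.univ.filter (fun l => quadraticChar (ZMod p) (l - i) = -1) := by
        ext l
        simp only [Finset.mem_filter, Finset.mem_erase, Finset.mem_univ, true_and,
          and_true]
        constructor
        · rintro ⟨hl, h⟩
          have hli0 : l - i ≠ 0 := sub_ne_zero.mpr hl
          rcases quadraticChar_dichotomy (F := ZMod p) hli0 with h1 | h1
          · exact absurd h1 h
          · exact h1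
        · intro h
          have hl : l ≠ i := by
            intro hl
            rw [hl, sub_self, quadraticChar_zero] at h
            norm_num at h
          refine ⟨hl, fun h1 => ?_⟩
          rw [h1] at h; norm_num at h
      rw [heq, QmatAux.my_card_single_shift,
        QmatAux.my_card_single hpk (-1) (Or.inr rfl)]
    rw [hc1, hc2]
    simp only [nsmul_eq_mul]
    push_cast
    linear_combination ((k:R) * (bi*bj)) * h2R + ((k:R) * (ci*cj)) * h2R
  · have hji : j ≠ i := fun h => hij h.symm
    have hd0 : j - i ≠ 0 := sub_ne_zero.mpr hji
    have hij0 : i - j ≠ 0 := sub_ne_zero.mpr hij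
    have hjmem : j ∈ Finset.univ.erase i := Finset.mem_erase.mpr ⟨hji, Finset.mem_univ j⟩
    have hchi_neg : quadraticChar (ZMod p) (i - j) = - quadraticChar (ZMod p) (j - i) := by
      rw [show i - j = -1 * (j - i) by ring, _root_.map_mul, QmatAux.my_chi_neg_one hpk]
      ring
    have hrest : ∀ l ∈ (Finset.univ.erase i).erase j,
        Qmat p ai bi ci i l * Qmat p aj bj cj j l
        = ((if quadraticChar (ZMod p) (l-i) = 1 ∧ quadraticChar (ZMod p) (l-j) = 1
              then bi * bj else 0)
           + (if quadraticChar (ZMod p) (l-i) = 1 ∧ quadraticChar (ZMod p) (l-j) = -1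
              then bi * cj else 0)
           + (if quadraticChar (ZMod p) (l-i) = -1 ∧ quadraticChar (ZMod p) (l-j) = 1
              then ci * bj else 0)
           + (if quadraticChar (ZMod p) (l-i) = -1 ∧ quadraticChar (ZMod p) (l-j) = -1
              then ci * cj else 0)) := by
      intro l hl
      have hlj : l ≠ j := (Finset.mem_erase.mp hl).1
      have hli : l ≠ i := (Finset.mem_erase.mp (Finset.mem_erase.mp hl).2).1
      have e1 : l - i ≠ 0 := sub_ne_zero.mpr hli
      have e2 : l - j ≠ 0 := sub_ne_zero.mpr hlj
      simp only [Qmat, Matrix.of_apply]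
      rw [if_neg (show ¬ i = l from fun h => hli h.symm),
        if_neg (show ¬ j = l from fun h => hlj h.symm)]
      rcases quadraticChar_dichotomy (F := ZMod p) e1 with h1 | h1 <;>
        rcases quadraticChar_dichotomy (F := ZMod p) e2 with h2 | h2
      · rw [if_pos ((quadraticChar_one_iff_isSquare e1).mp h1),
          if_pos ((quadraticChar_one_iff_isSquare e2).mp h2)]
        norm_num [h1, h2]
      · rw [if_pos ((quadraticChar_one_iff_isSquare e1).mp h1),
          if_neg (quadraticChar_neg_one_iff_not_isSquare.mp h2)]
        norm_num [h1, h2]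
      · rw [if_neg (quadraticChar_neg_one_iff_not_isSquare.mp h1),
          if_pos ((quadraticChar_one_iff_isSquare e2).mp h2)]
        norm_num [h1, h2]
      · rw [if_neg (quadraticChar_neg_one_iff_not_isSquare.mp h1),
          if_neg (quadraticChar_neg_one_iff_not_isSquare.mp h2)]
        norm_num [h1, h2]
    have hfix : ∀ (ε δ : ℤ), ε ≠ 0 → δ ≠ 0 →
        ((Finset.univ.erase i).erase j).filter (fun l => quadraticChar (ZMod p) (l-i) = ε
            ∧ quadraticChar (ZMod p) (l-j) = δ)
        = Finset.univ.filter (fun l => quadraticChar (ZMod p) (l-i) = ε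
            ∧ quadraticChar (ZMod p) (l-j) = δ) := by
      intro ε δ hε hδ
      ext l
      simp only [Finset.mem_filter, Finset.mem_erase, Finset.mem_univ,
        true_and, and_true]
      constructor
      · rintro ⟨_, h⟩; exact h
      · rintro ⟨h1, h2⟩
        have hli : l ≠ i := by
          intro hl; apply hε; rw [← h1, hl, sub_self, quadraticChar_zero]
        have hlj : l ≠ j := by
          intro hl; apply hδ; rw [← h2, hl, sub_self, quadraticChar_zero]
        tauto
    rcases quadraticChar_dichotomy (F := ZMod p) hd0 with hd | hd
    · -- j - i is a square
      have hsq : IsSquare (j - i) := (quadraticChar_one_iff_isSquare hd0).mp hd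
      have hnsq : ¬ IsSquare (i - j) := by
        apply quadraticChar_neg_one_iff_not_isSquare.mp
        rw [hchi_neg, hd]
      have hRHS : Qmat p (ai * aj + bi * bj + ci * cj)
          ((ai * cj + bi * aj) + (k : R) * (bi * bj + ci * cj) + (k : R) * (bi * cj) +
            ((k : R) + 1) * (ci * bj))
          ((ai * bj + ci * aj) + (k : R) * (bi * bj + ci * cj) + ((k : R) + 1) * (bi * cj) +
            (k : R) * (ci * bj)) i j
          = (ai * cj + bi * aj) + (k : R) * (bi * bj + ci * cj) + (k : R) * (bi * cj) +
            ((k : R) + 1) * (ci * bj) := by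
        simp only [Qmat, Matrix.of_apply]
        rw [if_neg hij, if_pos hsq]
      have ht1 : Qmat p ai bi ci i i * Qmat p aj bj cj j i = ai * cj := by
        simp only [Qmat, Matrix.of_apply]
        rw [if_neg hji, if_neg hnsq]
        simp
      have ht2 : Qmat p ai bi ci i j * Qmat p aj bj cj j j = bi * aj := by
        simp only [Qmat, Matrix.of_apply]
        rw [if_neg hij, if_pos hsq]
        simp
      rw [hRHS, ← Finset.add_sum_erase _ _ (Finset.mem_univ i),
        ← Finset.add_sum_erase _ _ hjmem, ht1, ht2, Finset.sum_congr rfl hrest,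
        Finset.sum_add_distrib, Finset.sum_add_distrib, Finset.sum_add_distrib,
        ← Finset.sum_filter, ← Finset.sum_filter, ← Finset.sum_filter, ← Finset.sum_filter,
        Finset.sum_const, Finset.sum_const, Finset.sum_const, Finset.sum_const,
        hfix 1 1 one_ne_zero one_ne_zero, hfix 1 (-1) one_ne_zero (by norm_num),
        hfix (-1) 1 (by norm_num) one_ne_zero, hfix (-1) (-1) (by norm_num) (by norm_num),
        QmatAux.my_card_final' hpk i j hij 1 1 (Or.inl rfl) (Or.inl rfl) k
          (by rw [hd]; norm_num),
        QmatAux.my_card_final' hpk i j hij 1 (-1) (Or.inl rfl) (Or.inr rfl) k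
          (by rw [hd]; norm_num),
        QmatAux.my_card_final' hpk i j hij (-1) 1 (Or.inr rfl) (Or.inl rfl) (k+1)
          (by rw [hd]; norm_num),
        QmatAux.my_card_final' hpk i j hij (-1) (-1) (Or.inr rfl) (Or.inr rfl) k
          (by rw [hd]; norm_num)]
      simp only [nsmul_eq_mul]
      push_cast
      ring
    · -- j - i is not a square
      have hnsq : ¬ IsSquare (j - i) := quadraticChar_neg_one_iff_not_isSquare.mp hd
      have hsq : IsSquare (i - j) := by
        have h1 : quadraticChar (ZMod p) (i - j) = 1 := by rw [hchi_neg, hd]; ring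
        exact (quadraticChar_one_iff_isSquare hij0).mp h1
      have hRHS : Qmat p (ai * aj + bi * bj + ci * cj)
          ((ai * cj + bi * aj) + (k : R) * (bi * bj + ci * cj) + (k : R) * (bi * cj) +
            ((k : R) + 1) * (ci * bj))
          ((ai * bj + ci * aj) + (k : R) * (bi * bj + ci * cj) + ((k : R) + 1) * (bi * cj) +
            (k : R) * (ci * bj)) i j
          = (ai * bj + ci * aj) + (k : R) * (bi * bj + ci * cj) + ((k : R) + 1) * (bi * cj) +
            (k : R) * (ci * bj) := by
        simp only [Qmat, Matrix.of_apply]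
        rw [if_neg hij, if_neg hnsq]
      have ht1 : Qmat p ai bi ci i i * Qmat p aj bj cj j i = ai * bj := by
        simp only [Qmat, Matrix.of_apply]
        rw [if_neg hji, if_pos hsq]
        simp
      have ht2 : Qmat p ai bi ci i j * Qmat p aj bj cj j j = ci * aj := by
        simp only [Qmat, Matrix.of_apply]
        rw [if_neg hij, if_neg hnsq]
        simp
      rw [hRHS, ← Finset.add_sum_erase _ _ (Finset.mem_univ i),
        ← Finset.add_sum_erase _ _ hjmem, ht1, ht2, Finset.sum_congr rfl hrest,
        Finset.sum_add_distrib, Finset.sum_add_distrib, Finset.sum_add_distrib,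
        ← Finset.sum_filter, ← Finset.sum_filter, ← Finset.sum_filter, ← Finset.sum_filter,
        Finset.sum_const, Finset.sum_const, Finset.sum_const, Finset.sum_const,
        hfix 1 1 one_ne_zero one_ne_zero, hfix 1 (-1) one_ne_zero (by norm_num),
        hfix (-1) 1 (by norm_num) one_ne_zero, hfix (-1) (-1) (by norm_num) (by norm_num),
        QmatAux.my_card_final' hpk i j hij 1 1 (Or.inl rfl) (Or.inl rfl) k
          (by rw [hd]; norm_num),
        QmatAux.my_card_final' hpk i j hij 1 (-1) (Or.inl rfl) (Or.inr rfl) (k+1)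
          (by rw [hd]; norm_num),
        QmatAux.my_card_final' hpk i j hij (-1) 1 (Or.inr rfl) (Or.inl rfl) k
          (by rw [hd]; norm_num),
        QmatAux.my_card_final' hpk i j hij (-1) (-1) (Or.inr rfl) (Or.inr rfl) k
          (by rw [hd]; norm_num)]
      simp only [nsmul_eq_mul]
      push_cast
      ring
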